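/- Let f_G : V(G) → {1,…,k1} and f_H : V(H) → {1,…,k2} be proper colorings of connected simple graphs G and H, where at least one of G and H has at least three vertices, and let g : V(G × H) → {1,…,k1} × {1,…,k2} be the coloring of the tensor product G × H given by g((u,v)) = (f_G(u), f_H(v)). If (u1,v1)(u2,v2) is an edge of G × H with N[(u1,v1)] ≠ N[(u2,v2)] but g(N[(u1,v1)]) = g(N[(u2,v2)]), then g(N[(u1,v1)]) = g(N[(u2,v2)]) = {(f_G(u1), f_H(v1)), (f_G(u2), f_H(v2))}. -/

import Mathlib

open SimpleGraph

/-- The closed neighborhood of a vertex: the vertex together with its neighbors. -/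
def SimpleGraph.closedNbhd {V : Type*} (G : SimpleGraph V) (v : V) : Set V :=
  insert v (G.neighborSet v)

/-- A coloring `f` is a locally identifying coloring of `G` if it is proper and, for every
edge `uw` whose endpoints have distinct closed neighborhoods, the sets of colors appearing
on the two closed neighborhoods are distinct. -/
def SimpleGraph.IsLidColoring {V α : Type*} (G : SimpleGraph V) (f : V → α) : Prop :=
  (∀ ⦃u w⦄, G.Adj u w → f u ≠ f w) ∧
  (∀ ⦃u w⦄, G.Adj u w → G.closedNbhd u ≠ G.closedNbhd w →
    f '' G.closedNbhd u ≠ f '' G.closedNbhd w)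

/-- `G` admits a locally identifying coloring with `k` colors. -/
def SimpleGraph.LidColorable {V : Type*} (G : SimpleGraph V) (k : ℕ) : Prop :=
  ∃ f : V → Fin k, G.IsLidColoring f

/-- The lid-chromatic number of `G`: the least number of colors in a lid-coloring of `G`. -/
noncomputable def SimpleGraph.lidChromaticNumber {V : Type*} (G : SimpleGraph V) : ℕ∞ :=
  ⨅ k ∈ {k : ℕ | G.LidColorable k}, (k : ℕ∞)

/-- The tensor (categorical/Kronecker) product of two simple graphs. -/
def SimpleGraph.tensorProd {α β : Type*} (G : SimpleGraph α) (H : SimpleGraph β) :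
    SimpleGraph (α × β) where
  Adj x y := G.Adj x.1 y.1 ∧ H.Adj x.2 y.2
  symm.symm _ _ h := ⟨h.1.symm, h.2.symm⟩
  loopless.irrefl x h := G.loopless.irrefl x.1 h.1

lemma lid_aux {α β : Type*} (G : SimpleGraph α) (H : SimpleGraph β)
    (k₁ k₂ : ℕ) (fG : α → Fin k₁) (fH : β → Fin k₂)
    (hfG : ∀ ⦃u w⦄, G.Adj u w → fG u ≠ fG w)
    (hfH : ∀ ⦃u w⦄, H.Adj u w → fH u ≠ fH w)
    (g : α × β → Fin k₁ × Fin k₂) (hg : ∀ p, g p = (fG p.1, fH p.2))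
    (u₁ u₂ : α) (v₁ v₂ : β) (hGu : G.Adj u₁ u₂) (hHv : H.Adj v₁ v₂)
    (hbad : g '' (G.tensorProd H).closedNbhd (u₁, v₁)
          = g '' (G.tensorProd H).closedNbhd (u₂, v₂)) :
    g '' (G.tensorProd H).closedNbhd (u₁, v₁) = {(fG u₁, fH v₁), (fG u₂, fH v₂)} := by
  have hmem : ∀ (u : α) (v : β) (p : α × β),
      p ∈ (G.tensorProd H).closedNbhd (u, v) ↔ p = (u, v) ∨ (G.Adj u p.1 ∧ H.Adj v p.2) := by
    intro u v p
    simp [SimpleGraph.closedNbhd, SimpleGraph.tensorProd, SimpleGraph.mem_neighborSet]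
  have keyA : ∀ a, G.Adj u₁ a → fG a = fG u₂ := by
    intro a ha
    have hx : (fG a, fH v₂) ∈ g '' (G.tensorProd H).closedNbhd (u₂, v₂) := by
      rw [← hbad]
      exact ⟨(a, v₂), (hmem _ _ _).2 (Or.inr ⟨ha, hHv⟩), by rw [hg]⟩
    obtain ⟨p, hp, hgp⟩ := hx
    rw [hg] at hgp
    rcases (hmem _ _ _).1 hp with h | ⟨h1, h2⟩
    · subst h
      exact (congrArg Prod.fst hgp).symm
    · exact absurd (congrArg Prod.snd hgp).symm (hfH h2)
  have keyB : ∀ b, H.Adj v₁ b → fH b = fH v₂ := by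
    intro b hb
    have hx : (fG u₂, fH b) ∈ g '' (G.tensorProd H).closedNbhd (u₂, v₂) := by
      rw [← hbad]
      exact ⟨(u₂, b), (hmem _ _ _).2 (Or.inr ⟨hGu, hb⟩), by rw [hg]⟩
    obtain ⟨p, hp, hgp⟩ := hx
    rw [hg] at hgp
    rcases (hmem _ _ _).1 hp with h | ⟨h1, h2⟩
    · subst h
      exact (congrArg Prod.snd hgp).symm
    · exact absurd (congrArg Prod.fst hgp).symm (hfG h1)
  apply Set.eq_of_subset_of_subset
  · rintro x ⟨p, hp, rfl⟩
    simp only [Set.mem_insert_iff, Set.mem_singleton_iff]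
    rcases (hmem _ _ _).1 hp with h | ⟨h1, h2⟩
    · subst h; left; exact hg _
    · right; rw [hg, keyA _ h1, keyB _ h2]
  · intro x hx
    simp only [Set.mem_insert_iff, Set.mem_singleton_iff] at hx
    rcases hx with rfl | rfl
    · exact ⟨(u₁, v₁), (hmem _ _ _).2 (Or.inl rfl), hg _⟩
    · exact ⟨(u₂, v₂), (hmem _ _ _).2 (Or.inr ⟨hGu, hHv⟩), hg _⟩

/-- If an edge of the tensor product is "bad" for the product coloring
`g (u, v) = (f_G u, f_H v)`, then both closed neighborhoods receive exactly the two colors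
of the endpoints of that edge. -/
theorem lid_stmt_14 {α β : Type*} (G : SimpleGraph α) (H : SimpleGraph β)
    (hG : G.Connected) (hH : H.Connected)
    (h3 : (∃ a b c : α, a ≠ b ∧ a ≠ c ∧ b ≠ c) ∨ (∃ a b c : β, a ≠ b ∧ a ≠ c ∧ b ≠ c))
    (k₁ k₂ : ℕ) (fG : α → Fin k₁) (fH : β → Fin k₂)
    (hfG : ∀ ⦃u w⦄, G.Adj u w → fG u ≠ fG w)
    (hfH : ∀ ⦃u w⦄, H.Adj u w → fH u ≠ fH w)
    (g : α × β → Fin k₁ × Fin k₂) (hg : ∀ p, g p = (fG p.1, fH p.2))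
    (u₁ u₂ : α) (v₁ v₂ : β)
    (hadj : (G.tensorProd H).Adj (u₁, v₁) (u₂, v₂))
    (hN : (G.tensorProd H).closedNbhd (u₁, v₁) ≠ (G.tensorProd H).closedNbhd (u₂, v₂))
    (hbad : g '' (G.tensorProd H).closedNbhd (u₁, v₁)
          = g '' (G.tensorProd H).closedNbhd (u₂, v₂)) :
    g '' (G.tensorProd H).closedNbhd (u₁, v₁) = {(fG u₁, fH v₁), (fG u₂, fH v₂)} ∧
    g '' (G.tensorProd H).closedNbhd (u₂, v₂) = {(fG u₁, fH v₁), (fG u₂, fH v₂)} := by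
  obtain ⟨hGu, hHv⟩ := hadj
  refine ⟨lid_aux G H k₁ k₂ fG fH hfG hfH g hg u₁ u₂ v₁ v₂ hGu hHv hbad, ?_⟩
  rw [lid_aux G H k₁ k₂ fG fH hfG hfH g hg u₂ u₁ v₂ v₁ hGu.symm hHv.symm hbad.symm,
    Set.pair_comm]
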